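/- Let R be a Rota-Baxter operator of nonzero weight λ on a finite-dimensional algebra A over a field F. Then R is splitting (i.e., A decomposes as a direct sum of subalgebras A₁ ⊕ A₂ with R restricting to -λ·id on A₁ and to 0 on A₂) if and only if R² = -λR. -/
import Mathlib


theorem rotaBaxter_splitting_iff_sq_eq_neg_smul
    (F : Type*) [Field F] (A : Type*) [NonUnitalNonAssocRing A]
    [Module F A] [SMulCommClass F A A] [IsScalarTower F A A]
    [FiniteDimensional F A]
    (lam : F) (hlam : lam ≠ 0)
    (R : A →ₗ[F] A)
    (hRB : ∀ x y : A, R x * R y = R (R x * y + x * R y + lam • (x * y))) :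
    (∃ A₁ A₂ : NonUnitalSubalgebra F A,
        IsCompl A₁.toSubmodule A₂.toSubmodule ∧
        (∀ x ∈ A₁, R x = -lam • x) ∧ (∀ x ∈ A₂, R x = 0)) ↔
      ∀ x : A, R (R x) = -lam • R x := by
  constructor
  · rintro ⟨A₁, A₂, hc, h1, h2⟩ x
    have hx : x ∈ A₁.toSubmodule ⊔ A₂.toSubmodule := by
      rw [codisjoint_iff.mp hc.codisjoint]; trivial
    obtain ⟨a, ha, b, hb, rfl⟩ := Submodule.mem_sup.mp hx
    have ha' : R a = -lam • a := h1 a ha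
    have hb' : R b = 0 := h2 b hb
    have hRa : R (R a) = -lam • R a := by
      rw [ha', map_smul, ha']
    simp [ha', hb', map_smul]
  · intro hR2
    have inj : Function.Injective (fun y : A => -lam • y) :=
      smul_right_injective A (neg_ne_zero.mpr hlam)
    refine ⟨{ carrier := {x | R x = -lam • x}
              add_mem' := ?_
              zero_mem' := by simp
              mul_mem' := ?_
              smul_mem' := ?_ },
            { carrier := {x | R x = 0}
              add_mem' := ?_
              zero_mem' := by simp
              mul_mem' := ?_
              smul_mem' := ?_ }, ?_, ?_, ?_⟩
    · intro a b ha hb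
      simp only [Set.mem_setOf_eq] at *
      rw [map_add, ha, hb, smul_add]
    · intro a b ha hb
      simp only [Set.mem_setOf_eq] at *
      have h := hRB a b
      rw [ha, hb] at h
      have hlhs : (-lam • a) * (-lam • b) = -lam • (-lam • (a * b)) := by
        rw [smul_mul_assoc, mul_smul_comm]
      have hrhs : R (-lam • a * b + a * -lam • b + lam • (a * b)) = R (-lam • (a * b)) := by
        congr 1
        rw [smul_mul_assoc, mul_smul_comm]
        module
      rw [hlhs, hrhs, map_smul] at h
      exact (inj h).symm
    · intro c a ha
      simp only [Set.mem_setOf_eq] at *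
      rw [map_smul, ha, smul_comm]
    · intro a b ha hb
      simp only [Set.mem_setOf_eq] at *
      rw [map_add, ha, hb, add_zero]
    · intro a b ha hb
      simp only [Set.mem_setOf_eq] at *
      have h := hRB a b
      rw [ha, hb] at h
      simp only [zero_mul, zero_add, mul_zero, map_smul] at h
      have : R (a * b) = (lam⁻¹ * 0 : F) • (0:A) := by
        rw [mul_zero, zero_smul]
        have := congrArg (fun z => lam⁻¹ • z) h.symm
        simpa [smul_smul, inv_mul_cancel₀ hlam] using this
      simpa using this
    · intro c a ha
      simp only [Set.mem_setOf_eq] at *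
      rw [map_smul, ha, smul_zero]
    · constructor
      · rw [Submodule.disjoint_def]
        intro x hx1 hx2
        simp only [Submodule.mem_mk, NonUnitalSubalgebra.mem_toSubmodule] at *
        have h1 : R x = -lam • x := hx1
        have h2 : R x = 0 := hx2
        have : (-lam) • x = (0:A) := by rw [← h1, h2]
        rcases smul_eq_zero.mp this with h | h
        · exact absurd (neg_eq_zero.mp h) hlam
        · exact h
      · rw [codisjoint_iff, eq_top_iff]
        intro x _
        have hsplit : x = (-lam⁻¹) • R x + (x + lam⁻¹ • R x) := by module
        rw [hsplit]
        apply Submodule.add_mem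
        · apply Submodule.mem_sup_left
          show R ((-lam⁻¹) • R x) = -lam • ((-lam⁻¹) • R x)
          rw [map_smul, hR2, smul_comm]
        · apply Submodule.mem_sup_right
          show R (x + lam⁻¹ • R x) = 0
          rw [map_add, map_smul, hR2, smul_smul, mul_neg, inv_mul_cancel₀ hlam]
          simp
    · intro x hx; exact hx
    · intro x hx; exact hx
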